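/- arXiv:2201.03284 — 3 statements merged into one kernel-verified Lean document; each statement's English description precedes it below -/
import Mathlib

section
/- Let p, q, p', q' ∈ R. Then there is an isomorphism of matrix factorisations [p, q] ⊗ [p', q'] ≅ [p + p', q] ⊗ [p', q' − q] of pq + p'q'. -/
open TensorProduct

noncomputable section

variable {R : Type*} [CommRing R]

section TensorDiff

variable {X0 X1 Y0 Y1 : Type*}
variable [AddCommGroup X0] [AddCommGroup X1] [AddCommGroup Y0] [AddCommGroup Y1]
variable [Module R X0] [Module R X1] [Module R Y0] [Module R Y1]

/-- Even-to-odd component of `d_X ⊗ 1 + 1 ⊗ d_Y` (Koszul signs) on the graded tensor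
product of two matrix factorisations. -/
def tensorD0 (d0 : X0 →ₗ[R] X1) (d1 : X1 →ₗ[R] X0)
    (e0 : Y0 →ₗ[R] Y1) (e1 : Y1 →ₗ[R] Y0) :
    (X0 ⊗[R] Y0) × (X1 ⊗[R] Y1) →ₗ[R] (X0 ⊗[R] Y1) × (X1 ⊗[R] Y0) :=
  LinearMap.coprod
    (LinearMap.prod (LinearMap.lTensor X0 e0) (LinearMap.rTensor Y0 d0))
    (LinearMap.prod (LinearMap.rTensor Y1 d1) (-(LinearMap.lTensor X1 e1)))

/-- Odd-to-even component of `d_X ⊗ 1 + 1 ⊗ d_Y` on `X ⊗ Y`. -/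
def tensorD1 (d0 : X0 →ₗ[R] X1) (d1 : X1 →ₗ[R] X0)
    (e0 : Y0 →ₗ[R] Y1) (e1 : Y1 →ₗ[R] Y0) :
    (X0 ⊗[R] Y1) × (X1 ⊗[R] Y0) →ₗ[R] (X0 ⊗[R] Y0) × (X1 ⊗[R] Y1) :=
  LinearMap.coprod
    (LinearMap.prod (LinearMap.lTensor X0 e1) (LinearMap.rTensor Y1 d0))
    (LinearMap.prod (LinearMap.rTensor Y0 d1) (-(LinearMap.lTensor X1 e0)))

end TensorDiff

/-- An isomorphism of matrix factorisations: an even linear isomorphism intertwining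
the differentials, given by its components on the graded pieces. -/
def MFIso {A0 A1 B0 B1 : Type*}
    [AddCommGroup A0] [AddCommGroup A1] [AddCommGroup B0] [AddCommGroup B1]
    [Module R A0] [Module R A1] [Module R B0] [Module R B1]
    (dA0 : A0 →ₗ[R] A1) (dA1 : A1 →ₗ[R] A0)
    (dB0 : B0 →ₗ[R] B1) (dB1 : B1 →ₗ[R] B0) : Prop :=
  ∃ (φ0 : A0 ≃ₗ[R] B0) (φ1 : A1 ≃ₗ[R] B1),
    (φ1 : A1 →ₗ[R] B1) ∘ₗ dA0 = dB0 ∘ₗ (φ0 : A0 →ₗ[R] B0) ∧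
    (φ0 : A0 →ₗ[R] B0) ∘ₗ dA1 = dB1 ∘ₗ (φ1 : A1 →ₗ[R] B1)

/-- The rank-1 Koszul matrix factorisation `[p,q]` of `pq` has both graded pieces
equal to `R` and differential components `p • id` and `q • id`. -/
def smulId (R : Type*) [CommRing R] (r : R) : R →ₗ[R] R := r • LinearMap.id

/-- Auxiliary shear linear equivalence `(x, y) ↦ (x, x + y)`. -/
def shearEquiv (M : Type*) [AddCommGroup M] [Module R M] : (M × M) ≃ₗ[R] (M × M) :=
  LinearEquiv.ofLinear
    (LinearMap.prod (LinearMap.fst R M M) (LinearMap.fst R M M + LinearMap.snd R M M))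
    (LinearMap.prod (LinearMap.fst R M M) (LinearMap.snd R M M - LinearMap.fst R M M))
    (LinearMap.ext fun x => by simp)
    (LinearMap.ext fun x => by simp)

/-- `[p, q] ⊗ [p', q'] ≅ [p + p', q] ⊗ [p', q' − q]` as matrix factorisations
of `pq + p'q'`. -/
theorem koszul_row_addition (p q p' q' : R) :
    MFIso (R := R)
      (tensorD0 (smulId R p) (smulId R q) (smulId R p') (smulId R q'))
      (tensorD1 (smulId R p) (smulId R q) (smulId R p') (smulId R q'))
      (tensorD0 (smulId R (p + p')) (smulId R q) (smulId R p') (smulId R (q' - q)))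
      (tensorD1 (smulId R (p + p')) (smulId R q) (smulId R p') (smulId R (q' - q))) := by
  refine ⟨LinearEquiv.refl R _, shearEquiv (R := R) (R ⊗[R] R), ?_, ?_⟩ <;>
    (ext <;>
      simp [tensorD0, tensorD1, smulId, shearEquiv, TensorProduct.smul_tmul', sub_smul,
        add_smul] <;> abel)

end
end

section
/- Let p, q, p', q' ∈ R. Then there is an isomorphism of matrix factorisations [p, q] ⊗ [p', q'] ≅ [p − p', q] ⊗ [p', q' + q]. -/
open TensorProduct

noncomputable section

variable {R : Type*} [CommRing R]

/-- The shear isomorphism `(c, d) ↦ (c, d - c)` on `M × M`. -/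
def shear {M : Type*} [AddCommGroup M] [Module R M] : (M × M) ≃ₗ[R] (M × M) :=
  LinearEquiv.ofLinear
    (LinearMap.prod (LinearMap.fst R M M) (LinearMap.snd R M M - LinearMap.fst R M M))
    (LinearMap.prod (LinearMap.fst R M M) (LinearMap.snd R M M + LinearMap.fst R M M))
    (by ext x <;> simp) (by ext x <;> simp)

/-- `[p, q] ⊗ [p', q'] ≅ [p − p', q] ⊗ [p', q' + q]` as matrix factorisations
of `pq + p'q'`. -/
theorem koszul_row_subtraction (p q p' q' : R) :
    MFIso (R := R)
      (tensorD0 (smulId R p) (smulId R q) (smulId R p') (smulId R q'))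
      (tensorD1 (smulId R p) (smulId R q) (smulId R p') (smulId R q'))
      (tensorD0 (smulId R (p - p')) (smulId R q) (smulId R p') (smulId R (q' + q)))
      (tensorD1 (smulId R (p - p')) (smulId R q) (smulId R p') (smulId R (q' + q))) := by
  refine ⟨LinearEquiv.refl R _, shear, ?_, ?_⟩ <;>
  · apply LinearMap.prod_ext <;> ext <;>
      simp [tensorD0, tensorD1, smulId, shear, LinearMap.lTensor_smul,
        LinearMap.rTensor_smul, TensorProduct.smul_tmul', sub_smul, add_smul,
        smul_comm] <;> abel

end
end

section
/- Let R = ℂ[x,x',a] and consider the quadratic polynomial W = a·(x'−x) (sum over i of aᵢ(xᵢ'−xᵢ)). The composite of the 1-morphisms corresponding to adding four copies of such quadratic superpotentials in a chain x⁽¹⁾→x⁽²⁾→⋯→x⁽⁵⁾ with intermediate variables integrated out, namely the polynomial a⁽¹⁾·(x⁽²⁾−x⁽¹⁾) + a⁽²⁾·(x⁽⁴⁾−x⁽³⁾) + a⁽³⁾·(x⁽⁵⁾−x⁽⁴⁾) + a⁽⁴⁾·(x⁽³⁾−x⁽²⁾), is, after successively eliminating the variables x⁽²⁾, x⁽³⁾,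 x⁽⁴⁾ and a⁽¹⁾, a⁽³⁾, a⁽⁴⁾ via the linear changes of variables a⁽¹⁾ ↦ a⁽¹⁾ and completing squares, related by an invertible linear change of variables to a⁽²⁾·(x⁽⁵⁾−x⁽¹⁾) plus a sum of products of pairs of fresh variables (a 'Knörrer' quadratic form). -/
open MvPolynomial

noncomputable section

set_option synthInstance.maxHeartbeats 1000000
set_option maxHeartbeats 1000000

/-- Variable set: `x⁽¹⁾,…,x⁽⁵⁾` (via `Sum.inl`) and `a⁽¹⁾,…,a⁽⁴⁾` (via `Sum.inr`),
each a list of `n` variables. -/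
abbrev V17 (n : ℕ) : Type := (Fin 5 ⊕ Fin 4) × Fin n

abbrev P17 (n : ℕ) : Type := MvPolynomial (V17 n) ℂ

/-- `x⁽ᵏ⁾ᵢ`. -/
def xv (n : ℕ) (k : Fin 5) (i : Fin n) : P17 n := X (Sum.inl k, i)

/-- `a⁽ʲ⁾ᵢ`. -/
def av (n : ℕ) (j : Fin 4) (i : Fin n) : P17 n := X (Sum.inr j, i)

/-- The Zorro-movie superpotential
`a⁽¹⁾·(x⁽²⁾−x⁽¹⁾) + a⁽²⁾·(x⁽⁴⁾−x⁽³⁾) + a⁽³⁾·(x⁽⁵⁾−x⁽⁴⁾) + a⁽⁴⁾·(x⁽³⁾−x⁽²⁾)`. -/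
def W17 (n : ℕ) : P17 n :=
  ∑ i : Fin n,
    (av n 0 i * (xv n 1 i - xv n 0 i) + av n 1 i * (xv n 3 i - xv n 2 i) +
      av n 2 i * (xv n 4 i - xv n 3 i) + av n 3 i * (xv n 2 i - xv n 1 i))

/-- The target superpotential `a⁽²⁾·(x⁽⁵⁾−x⁽¹⁾)` plus a sum of products of pairs of
fresh variables (a 'Knörrer' quadratic form), the pairs being
`(a⁽¹⁾ᵢ, x⁽²⁾ᵢ), (a⁽³⁾ᵢ, x⁽⁴⁾ᵢ), (a⁽⁴⁾ᵢ, x⁽³⁾ᵢ)`. -/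
def W17' (n : ℕ) : P17 n :=
  (∑ i : Fin n, av n 1 i * (xv n 4 i - xv n 0 i)) +
    ∑ i : Fin n, (av n 0 i * xv n 1 i + av n 2 i * xv n 3 i + av n 3 i * xv n 2 i)

/-- Forward substitution on variables. -/
def F17 (n : ℕ) : V17 n → P17 n
  | (Sum.inl ⟨0, _⟩, i) => xv n 0 i
  | (Sum.inl ⟨1, _⟩, i) => xv n 1 i + xv n 0 i
  | (Sum.inl ⟨2, _⟩, i) => xv n 2 i + xv n 1 i + xv n 0 i
  | (Sum.inl ⟨3, _⟩, i) => xv n 1 i + xv n 2 i + xv n 4 i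
  | (Sum.inl ⟨_ + 4, _⟩, i) => xv n 1 i + xv n 2 i + xv n 3 i + xv n 4 i
  | (Sum.inr j, i) => av n j i

/-- Inverse substitution on variables. -/
def G17 (n : ℕ) : V17 n → P17 n
  | (Sum.inl ⟨0, _⟩, i) => xv n 0 i
  | (Sum.inl ⟨1, _⟩, i) => xv n 1 i - xv n 0 i
  | (Sum.inl ⟨2, _⟩, i) => xv n 2 i - xv n 1 i
  | (Sum.inl ⟨3, _⟩, i) => xv n 4 i - xv n 3 i
  | (Sum.inl ⟨_ + 4, _⟩, i) => xv n 3 i - xv n 2 i + xv n 0 i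
  | (Sum.inr j, i) => av n j i

/-- The Zorro-movie computation: after eliminating the intermediate variables by
completing squares, the superpotential of the composite
`(ev_x ⊠ 1_x) ∘ (1_x ⊠ coev_x)` is related to `a⁽²⁾·(x⁽⁵⁾−x⁽¹⁾)` plus a Knörrer
quadratic form by an invertible linear change of variables:  there is a `ℂ`-algebra
automorphism `φ` of the polynomial ring sending each variable to a linear form
(degree-1 polynomial in the span of the variables) with `φ(W) = W'`. -/
theorem zorro_linear_change_of_variables (n : ℕ) :
    ∃ φ : P17 n ≃ₐ[ℂ] P17 n,
      (∀ v : V17 n, φ (X v) ∈ Submodule.span ℂ (Set.range (X : V17 n → P17 n))) ∧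
      φ (W17 n) = W17' n := by
  have hGF : (aeval (G17 n)).comp (aeval (F17 n)) = AlgHom.id ℂ (P17 n) := by
    apply MvPolynomial.algHom_ext
    rintro ⟨k | j, i⟩
    · fin_cases k <;> simp [F17, G17, xv, av] <;> ring
    · simp [F17, G17, av]
  have hFG : (aeval (F17 n)).comp (aeval (G17 n)) = AlgHom.id ℂ (P17 n) := by
    apply MvPolynomial.algHom_ext
    rintro ⟨k | j, i⟩
    · fin_cases k <;> simp [F17, G17, xv, av] <;> ring
    · simp [F17, G17, av]
  refine ⟨AlgEquiv.ofAlgHom (aeval (F17 n)) (aeval (G17 n)) hFG hGF, ?_, ?_⟩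
  · rintro ⟨k | j, i⟩
    · have mem : ∀ v : V17 n, (X v : P17 n) ∈
          Submodule.span ℂ (Set.range (X : V17 n → P17 n)) := fun v =>
        Submodule.subset_span (Set.mem_range_self v)
      fin_cases k <;>
        simp only [AlgEquiv.ofAlgHom_apply, aeval_X, F17, xv] <;>
        first
          | exact mem _
          | exact add_mem (mem _) (mem _)
          | exact add_mem (add_mem (mem _) (mem _)) (mem _)
          | exact add_mem (add_mem (add_mem (mem _) (mem _)) (mem _)) (mem _)
    · simpa only [AlgEquiv.ofAlgHom_apply, aeval_X, F17, av, SetLike.mem_coe] using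
        Submodule.subset_span (Set.mem_range_self ((Sum.inr j, i) : V17 n))
  · show aeval (F17 n) (W17 n) = W17' n
    rw [W17, W17', map_sum, ← Finset.sum_add_distrib]
    refine Finset.sum_congr rfl fun i _ => ?_
    simp only [map_add, map_sub, map_mul, xv, av, aeval_X, F17]
    ring

end
end
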